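/- Let t ≥ 2 be an integer, let β ∈ (1, ∞), and let (σ_n)_{n≥1} be a strictly increasing sequence of positive integers with σ_n − σ_{n−1} ≥ n for all n ≥ 2 and lim_{n→∞} (σ_n − σ_{n−1})/n = β, where σ_0 := 1. For each m ≥ 1 let V_m = {σ_{m−1} + m − 1, σ_{m−1} + m, …, σ_m}, and for each k ≥ 1 define A_k = (∑_{m=1}^{k} ∑_{i∈V_m} log((2i+1)^t − (2i)^t)) / (log 2 + 2[∑_{m=1}^{k} ∑_{i∈V_m} t·log(2i+1) + ∑_{m=1}^{k} (m−1)·log((2σ_m+1)^t + m)]). Then liminf_{k→∞} A_k ≥ (t−1)(β−1)/(2tβ). -/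

import Mathlib

open Filter Finset Real

noncomputable def stmt18bN (t : ℕ) (σ : ℕ → ℕ) (m : ℕ) : ℝ :=
  ∑ i ∈ Finset.Icc (σ (m - 1) + m - 1) (σ m),
    Real.log ((((2 * i + 1) ^ t - (2 * i) ^ t : ℕ)) : ℝ)

noncomputable def stmt18bS (t : ℕ) (σ : ℕ → ℕ) (m : ℕ) : ℝ :=
  ∑ i ∈ Finset.Icc (σ (m - 1) + m - 1) (σ m), (t : ℝ) * Real.log (((2 * i + 1 : ℕ)) : ℝ)

noncomputable def stmt18bT (t : ℕ) (σ : ℕ → ℕ) (m : ℕ) : ℝ :=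
  ((m : ℝ) - 1) * Real.log ((((2 * σ m + 1) ^ t + m : ℕ)) : ℝ)

set_option maxHeartbeats 2000000 in
/-- Lemma 4.7 (case `β < ∞`): with `V_m = {σ_{m-1}+m-1, …, σ_m}` (σ_0 := 1) and
`A_k = (∑_{m=1}^k ∑_{i∈V_m} log((2i+1)^t-(2i)^t)) /
  (log 2 + 2[∑_{m=1}^k ∑_{i∈V_m} t log(2i+1) + ∑_{m=1}^k (m-1) log((2σ_m+1)^t+m)])`,
one has `liminf_k A_k ≥ (t-1)(β-1)/(2tβ)`. -/
theorem stmt18 (t : ℕ) (ht : 2 ≤ t) (β : ℝ) (hβ : 1 < β)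
    (σ : ℕ → ℕ) (hσ0 : σ 0 = 1) (hσ1 : 1 ≤ σ 1)
    (hmono : ∀ n : ℕ, 1 ≤ n → σ n < σ (n + 1))
    (hgap : ∀ n : ℕ, 2 ≤ n → n ≤ σ n - σ (n - 1))
    (hlim : Filter.Tendsto (fun n : ℕ => ((σ n - σ (n - 1) : ℕ) : ℝ) / (n : ℝ))
      Filter.atTop (nhds β)) :
    ((t : ℝ) - 1) * (β - 1) / (2 * (t : ℝ) * β) ≤
      Filter.liminf (fun k : ℕ =>
        (∑ m ∈ Finset.Icc 1 k, ∑ i ∈ Finset.Icc (σ (m - 1) + m - 1) (σ m),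
            Real.log ((((2 * i + 1) ^ t - (2 * i) ^ t : ℕ)) : ℝ)) /
          (Real.log 2 + 2 *
            ((∑ m ∈ Finset.Icc 1 k, ∑ i ∈ Finset.Icc (σ (m - 1) + m - 1) (σ m),
                (t : ℝ) * Real.log (((2 * i + 1 : ℕ)) : ℝ)) +
              ∑ m ∈ Finset.Icc 1 k,
                ((m : ℝ) - 1) * Real.log ((((2 * σ m + 1) ^ t + m : ℕ)) : ℝ))))
        Filter.atTop := by
  have hrw : (fun k : ℕ =>
        (∑ m ∈ Finset.Icc 1 k, ∑ i ∈ Finset.Icc (σ (m - 1) + m - 1) (σ m),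
            Real.log ((((2 * i + 1) ^ t - (2 * i) ^ t : ℕ)) : ℝ)) /
          (Real.log 2 + 2 *
            ((∑ m ∈ Finset.Icc 1 k, ∑ i ∈ Finset.Icc (σ (m - 1) + m - 1) (σ m),
                (t : ℝ) * Real.log (((2 * i + 1 : ℕ)) : ℝ)) +
              ∑ m ∈ Finset.Icc 1 k,
                ((m : ℝ) - 1) * Real.log ((((2 * σ m + 1) ^ t + m : ℕ)) : ℝ))))
      = (fun k : ℕ => (∑ m ∈ Finset.Icc 1 k, stmt18bN t σ m) /
          (Real.log 2 + 2 * ((∑ m ∈ Finset.Icc 1 k, stmt18bS t σ m)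
            + ∑ m ∈ Finset.Icc 1 k, stmt18bT t σ m))) := rfl
  rw [hrw]
  set Nf : ℕ → ℝ := fun k => ∑ m ∈ Finset.Icc 1 k, stmt18bN t σ m with hNf
  set Sf : ℕ → ℝ := fun k => ∑ m ∈ Finset.Icc 1 k, stmt18bS t σ m with hSf
  set Tf : ℕ → ℝ := fun k => ∑ m ∈ Finset.Icc 1 k, stmt18bT t σ m with hTf
  set A : ℕ → ℝ := fun k => Nf k / (Real.log 2 + 2 * (Sf k + Tf k)) with hAdef
  -- basic facts about σ
  have ht0 : 0 < t := by omega
  have hβ0 : 0 < β - 1 := by linarith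
  have hmono' : Monotone σ := monotone_nat_of_le_succ (by
    intro n
    rcases Nat.eq_zero_or_pos n with h | h
    · subst h; simpa [hσ0] using hσ1
    · exact (hmono n h).le)
  have hgap' : ∀ m : ℕ, 2 ≤ m → σ (m - 1) + m ≤ σ m := by
    intro m hm
    have h1 := hgap m hm
    have h2 : σ (m - 1) ≤ σ m := hmono' (by omega)
    omega
  have hne : ∀ m : ℕ, 1 ≤ m → σ (m - 1) + m - 1 ≤ σ m := by
    intro m hm
    rcases eq_or_lt_of_le hm with h | h
    · simp [← h, hσ0]; omega
    · have := hgap' m (by omega); omega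
  have hmge : ∀ m : ℕ, m ≤ σ m := by
    intro m
    induction m with
    | zero => omega
    | succ n ih =>
      rcases Nat.eq_zero_or_pos n with h | h
      · subst h; simpa using hσ1
      · have := hmono n h; omega
  have hquad : ∀ m : ℕ, 1 ≤ m → m * (m + 1) ≤ 2 * σ m := by
    intro m hm
    induction m, hm using Nat.le_induction with
    | base => simpa using hσ1
    | succ m hm ih =>
      have h1 : σ m + (m + 1) ≤ σ (m + 1) := by simpa using hgap' (m + 1) (by omega)
      calc (m + 1) * (m + 1 + 1) = m * (m + 1) + 2 * (m + 1) := by ring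
        _ ≤ 2 * σ m + 2 * (m + 1) := by omega
        _ ≤ 2 * σ (m + 1) := by omega
  -- nonnegativity
  have hbS0 : ∀ m : ℕ, 0 ≤ stmt18bS t σ m := by
    intro m
    refine Finset.sum_nonneg fun i _ => mul_nonneg (by positivity) (Real.log_natCast_nonneg _)
  have hbT0 : ∀ m : ℕ, 1 ≤ m → 0 ≤ stmt18bT t σ m := by
    intro m hm
    refine mul_nonneg (by simp; exact_mod_cast hm) (Real.log_natCast_nonneg _)
  have hbN0 : ∀ m : ℕ, 0 ≤ stmt18bN t σ m := by
    intro m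
    refine Finset.sum_nonneg fun i _ => Real.log_natCast_nonneg _
  have hS0 : ∀ k, 0 ≤ Sf k := fun k => Finset.sum_nonneg fun m _ => hbS0 m
  have hT0 : ∀ k, 0 ≤ Tf k := fun k => Finset.sum_nonneg fun m hm =>
    hbT0 m (Finset.mem_Icc.mp hm).1
  have hN0 : ∀ k, 0 ≤ Nf k := fun k => Finset.sum_nonneg fun m _ => hbN0 m
  have hlog2 : (0:ℝ) < Real.log 2 := Real.log_pos (by norm_num)
  have hDpos : ∀ k, 0 < Real.log 2 + 2 * (Sf k + Tf k) := by
    intro k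
    have := hS0 k; have := hT0 k; linarith
  -- the key pow inequality
  have hpow : ∀ a : ℕ, (a + 1) ^ (t - 1) ≤ (a + 1) ^ t - a ^ t := by
    intro a
    have h3 : a ^ t = a ^ (t - 1) * a := by
      rw [← pow_succ]; congr 1; omega
    have h4 : (a + 1) ^ t = (a + 1) ^ (t - 1) * a + (a + 1) ^ (t - 1) := by
      have : (a + 1) ^ t = (a + 1) ^ (t - 1) * (a + 1) := by
        rw [← pow_succ]; congr 1; omega
      rw [this]; ring
    have h2 : a ^ (t - 1) * a ≤ (a + 1) ^ (t - 1) * a :=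
      Nat.mul_le_mul_right _ (Nat.pow_le_pow_left (by omega) _)
    omega
  have hsublb : ∀ i : ℕ, 1 ≤ (2 * i + 1) ^ t - (2 * i) ^ t := by
    intro i
    have := hpow (2 * i)
    have : 1 ≤ (2 * i + 1) ^ (t - 1) := Nat.one_le_pow _ _ (by omega)
    omega
  -- per-term comparisons
  have hNSterm : ∀ i : ℕ, ((t:ℝ) - 1) * Real.log (((2 * i + 1 : ℕ)) : ℝ)
      ≤ Real.log ((((2 * i + 1) ^ t - (2 * i) ^ t : ℕ)) : ℝ) := by
    intro i
    have h1 : (0:ℝ) < (((2 * i + 1) ^ (t - 1) : ℕ) : ℝ) := by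
      have : 1 ≤ (2 * i + 1) ^ (t - 1) := Nat.one_le_pow _ _ (by omega)
      exact_mod_cast this
    have h2 : (((2 * i + 1) ^ (t - 1) : ℕ) : ℝ) ≤ (((2 * i + 1) ^ t - (2 * i) ^ t : ℕ) : ℝ) := by
      exact_mod_cast hpow (2 * i)
    have h3 := Real.log_le_log h1 h2
    rw [Nat.cast_pow, Real.log_pow] at h3
    have h4 : ((t - 1 : ℕ) : ℝ) = (t:ℝ) - 1 := by
      have : (1:ℕ) ≤ t := by omega
      push_cast [Nat.cast_sub this]; ring
    rw [h4] at h3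
    exact h3
  have hNS : ∀ k, (((t:ℝ) - 1) / t) * Sf k ≤ Nf k := by
    intro k
    rw [hSf, hNf]
    rw [Finset.mul_sum]
    refine Finset.sum_le_sum fun m _ => ?_
    rw [stmt18bS, stmt18bN, Finset.mul_sum]
    refine Finset.sum_le_sum fun i _ => ?_
    have ht' : (t:ℝ) ≠ 0 := by positivity
    calc ((t:ℝ) - 1) / t * ((t:ℝ) * Real.log (((2 * i + 1 : ℕ)) : ℝ))
        = ((t:ℝ) - 1) * Real.log (((2 * i + 1 : ℕ)) : ℝ) := by field_simp
      _ ≤ _ := hNSterm i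
  have hNleS : ∀ k, Nf k ≤ Sf k := by
    intro k
    refine Finset.sum_le_sum fun m _ => ?_
    refine Finset.sum_le_sum fun i _ => ?_
    have h1 : (0:ℝ) < (((2 * i + 1) ^ t - (2 * i) ^ t : ℕ) : ℝ) := by
      exact_mod_cast hsublb i
    have h2 : (((2 * i + 1) ^ t - (2 * i) ^ t : ℕ) : ℝ) ≤ (((2 * i + 1) ^ t : ℕ) : ℝ) := by
      exact_mod_cast Nat.sub_le _ _
    have h3 := Real.log_le_log h1 h2
    rw [Nat.cast_pow, Real.log_pow] at h3
    exact h3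
  -- S grows at least linearly
  have hSlow : ∀ k : ℕ, (k : ℝ) * ((t:ℝ) * Real.log 3) ≤ Sf k := by
    intro k
    have hc : (Finset.Icc 1 k).card = k := by rw [Nat.card_Icc]; omega
    calc (k:ℝ) * ((t:ℝ) * Real.log 3)
        = ∑ _m ∈ Finset.Icc 1 k, ((t:ℝ) * Real.log 3) := by
          rw [Finset.sum_const, hc, nsmul_eq_mul]
      _ ≤ Sf k := by
          refine Finset.sum_le_sum fun m hm => ?_
          have hm1 : 1 ≤ m := (Finset.mem_Icc.mp hm).1
          have hmem : σ m ∈ Finset.Icc (σ (m - 1) + m - 1) (σ m) :=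
            Finset.mem_Icc.mpr ⟨hne m hm1, le_refl _⟩
          have h1 : (t:ℝ) * Real.log (((2 * σ m + 1 : ℕ)) : ℝ) ≤ stmt18bS t σ m :=
            Finset.single_le_sum (f := fun i => (t:ℝ) * Real.log (((2 * i + 1 : ℕ)) : ℝ))
              (fun i _ => mul_nonneg (by positivity) (Real.log_natCast_nonneg _)) hmem
          refine le_trans ?_ h1
          refine mul_le_mul_of_nonneg_left ?_ (by positivity)
          refine Real.log_le_log (by norm_num) ?_
          have h2 : 3 ≤ 2 * σ m + 1 := by have := hmge m; omega
          exact_mod_cast h2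
  have hSinf : Tendsto Sf atTop atTop := by
    refine tendsto_atTop_mono hSlow ?_
    have h3 : (0:ℝ) < (t:ℝ) * Real.log 3 := by
      have : (0:ℝ) < Real.log 3 := Real.log_pos (by norm_num)
      positivity
    exact (tendsto_natCast_atTop_atTop (R := ℝ)).atTop_mul_const h3
  -- the key bound on T
  have hTS : ∀ θ : ℝ, 0 < θ → ∃ C : ℝ, 0 ≤ C ∧ ∀ k, Tf k ≤ (1 / (β - 1) + θ) * Sf k + C := by
    intro θ hθ
    set c : ℝ := 1 / (β - 1) + θ with hc
    have hc0 : 0 < c := add_pos (by positivity) hθ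
    set δ : ℝ := θ * (β - 1) / (2 * c) with hδ
    have hδ0 : 0 < δ := by rw [hδ]; positivity
    have hθc : θ ≤ c := by
      rw [hc]
      have h9 : 0 < 1 / (β - 1) := by positivity
      linarith
    have hδβ : δ ≤ (β - 1) / 2 := by
      rw [hδ, div_le_div_iff₀ (by positivity) (by norm_num)]
      nlinarith
    have hkey : c * (β - 1 - δ) = 1 + θ * (β - 1) / 2 := by
      rw [hδ, hc]; field_simp; ring
    -- eventual gap bounds
    have hev1 : ∀ᶠ m : ℕ in atTop,
        (β - δ) * m ≤ ((σ m - σ (m - 1) : ℕ) : ℝ) ∧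
          ((σ m - σ (m - 1) : ℕ) : ℝ) ≤ (β + δ) * m := by
      have h1 := hlim.eventually (eventually_gt_nhds (show β - δ < β by linarith))
      have h2 := hlim.eventually (eventually_lt_nhds (show β < β + δ by linarith))
      filter_upwards [h1, h2, eventually_ge_atTop 1] with m hm1 hm2 hm3
      have hm0 : (0:ℝ) < m := by exact_mod_cast hm3
      rw [lt_div_iff₀ hm0] at hm1
      rw [div_lt_iff₀ hm0] at hm2
      exact ⟨hm1.le, hm2.le⟩
    -- eventual log largeness
    have hev2 : ∀ᶠ m : ℕ in atTop,
        Real.log 2 + 2 * t * (β + δ) ≤ (θ * (β - 1) / 2) * t * Real.log m := by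
      have hq0 : (0:ℝ) < (θ * (β - 1) / 2) * t := by
        have h8 : (0:ℝ) < t := by exact_mod_cast ht0
        positivity
      have h1 : Tendsto (fun m : ℕ => Real.log m) atTop atTop :=
        Real.tendsto_log_atTop.comp tendsto_natCast_atTop_atTop
      have h2 := h1.eventually_ge_atTop
        ((Real.log 2 + 2 * t * (β + δ)) / ((θ * (β - 1) / 2) * t))
      filter_upwards [h2] with m hm
      rw [div_le_iff₀ hq0] at hm
      linarith [hm]
    -- the per-block eventual bound
    have hblock : ∀ᶠ m : ℕ in atTop, stmt18bT t σ m ≤ c * stmt18bS t σ m := by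
      filter_upwards [hev1, hev2, eventually_ge_atTop 2] with m hgapb hlogb hm2
      have hm1 : (1:ℕ) ≤ m := by omega
      have hne' : σ (m - 1) + m - 1 ≤ σ m := hne m hm1
      have hσle : σ (m - 1) ≤ σ m := hmono' (by omega)
      have htR : (0:ℝ) < (t:ℝ) := by exact_mod_cast ht0
      have hmR : (2:ℝ) ≤ (m:ℝ) := by exact_mod_cast hm2
      have hm10 : (0:ℝ) < (m:ℝ) - 1 := by linarith
      -- cast of the gap
      have hg : ((σ m - σ (m - 1) : ℕ) : ℝ) = (σ m : ℝ) - (σ (m - 1) : ℝ) :=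
        Nat.cast_sub hσle
      set Lm : ℝ := Real.log (((2 * σ (m - 1) + 1 : ℕ)) : ℝ) with hLm
      have hLm0 : 0 ≤ Lm := Real.log_natCast_nonneg _
      -- quadratic growth
      have hquad' : (m - 1) * m ≤ 2 * σ (m - 1) := by
        have h7 := hquad (m - 1) (by omega)
        have hmm : m - 1 + 1 = m := by omega
        rwa [hmm] at h7
      have hmlequad : m ≤ 2 * σ (m - 1) + 1 := by
        have h6 : m ≤ (m - 1) * m := Nat.le_mul_of_pos_left m (by omega)
        omega
      have hquadR : ((m:ℝ) - 1) * m ≤ 2 * (σ (m - 1) : ℝ) := by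
        have h3 : (((m - 1) * m : ℕ) : ℝ) = ((m:ℝ) - 1) * m := by
          push_cast [Nat.cast_sub hm1]
          ring
        rw [← h3]
        exact_mod_cast hquad'
      -- card of the block, real version
      have hcardR : (((σ m + 1 - (σ (m - 1) + m - 1) : ℕ)) : ℝ)
          = ((σ m : ℝ) - (σ (m - 1) : ℝ)) - (m : ℝ) + 2 := by
        have e1 : (σ m + 1 - (σ (m - 1) + m - 1) : ℕ) + (σ (m - 1) + m - 1) = σ m + 1 := by
          omega
        have e2 : ((σ (m - 1) + m - 1 : ℕ) : ℝ) = (σ (m - 1) : ℝ) + (m : ℝ) - 1 := by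
          have h5 : (1:ℕ) ≤ σ (m - 1) + m := by omega
          push_cast [Nat.cast_sub h5]
          ring
        have e3 := congrArg (fun n : ℕ => (n : ℝ)) e1
        push_cast at e3
        rw [e2] at e3
        linarith
      have hcard_lb : (β - 1 - δ) * m ≤ (((σ m + 1 - (σ (m - 1) + m - 1) : ℕ)) : ℝ) := by
        rw [hcardR]
        have h1 := hgapb.1
        rw [hg] at h1
        nlinarith
      -- lower bound on bS
      have hSlb : (((σ m + 1 - (σ (m - 1) + m - 1) : ℕ)) : ℝ) * ((t:ℝ) * Lm)
          ≤ stmt18bS t σ m := by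
        rw [stmt18bS]
        have h1 : ∀ i ∈ Finset.Icc (σ (m - 1) + m - 1) (σ m),
            (t:ℝ) * Lm ≤ (t:ℝ) * Real.log (((2 * i + 1 : ℕ)) : ℝ) := by
          intro i hi
          have hip : σ (m - 1) + m - 1 ≤ i := (Finset.mem_Icc.mp hi).1
          have hi2 : σ (m - 1) ≤ i := by omega
          refine mul_le_mul_of_nonneg_left ?_ (by positivity)
          rw [hLm]
          refine Real.log_le_log (by positivity) ?_
          exact_mod_cast (by omega : 2 * σ (m - 1) + 1 ≤ 2 * i + 1)
        have h2 := Finset.card_nsmul_le_sum (Finset.Icc (σ (m - 1) + m - 1) (σ m))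
          (fun i => (t:ℝ) * Real.log (((2 * i + 1 : ℕ)) : ℝ)) ((t:ℝ) * Lm) h1
        rw [Nat.card_Icc, nsmul_eq_mul] at h2
        exact h2
      -- upper bound on bT
      have hTub : stmt18bT t σ m
          ≤ ((m:ℝ) - 1) * ((t:ℝ) * Real.log (((2 * σ m + 1 : ℕ)) : ℝ) + Real.log 2) := by
        rw [stmt18bT]
        refine mul_le_mul_of_nonneg_left ?_ (by linarith)
        have h1 : ((2 * σ m + 1) ^ t + m : ℕ) ≤ 2 * (2 * σ m + 1) ^ t := by
          have h2 : m ≤ σ m := hmge m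
          have h3 : 2 * σ m + 1 ≤ (2 * σ m + 1) ^ t := Nat.le_self_pow (by omega) _
          omega
        have h4 : (0:ℝ) < (((2 * σ m + 1) ^ t + m : ℕ) : ℝ) := by
          have h4' : 1 ≤ (2 * σ m + 1) ^ t + m :=
            le_trans (Nat.one_le_pow t _ (by omega)) (Nat.le_add_right _ _)
          exact_mod_cast h4'
        have h5 := Real.log_le_log h4 (Nat.cast_le.mpr h1)
        have h6 : ((2 * (2 * σ m + 1) ^ t : ℕ) : ℝ)
            = 2 * (((2 * σ m + 1 : ℕ)) : ℝ) ^ t := by push_cast; ring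
        rw [h6, Real.log_mul (by norm_num) (by positivity), Real.log_pow] at h5
        linarith
      -- log comparison: log(2σ_m+1) ≤ Lm + 2(β+δ)/(m-1)
      have hlogle : Real.log (((2 * σ m + 1 : ℕ)) : ℝ)
          ≤ Lm + 2 * (β + δ) / ((m:ℝ) - 1) := by
        have ha0 : (0:ℝ) < (((2 * σ (m - 1) + 1 : ℕ)) : ℝ) := by positivity
        have hb0' : (0:ℝ) ≤ 2 * ((σ m : ℝ) - (σ (m - 1) : ℝ)) := by
          have h0 : (σ (m - 1) : ℝ) ≤ (σ m : ℝ) := by exact_mod_cast hσle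
          linarith
        have hxy : (((2 * σ m + 1 : ℕ)) : ℝ)
            = (((2 * σ (m - 1) + 1 : ℕ)) : ℝ) + 2 * ((σ m : ℝ) - (σ (m - 1) : ℝ)) := by
          push_cast; ring
        have hx0 : (0:ℝ) < (((2 * σ m + 1 : ℕ)) : ℝ) := by positivity
        -- log(a+b) ≤ log a + b / a
        have h1 : Real.log (((2 * σ m + 1 : ℕ)) : ℝ) - Lm
            ≤ 2 * ((σ m : ℝ) - (σ (m - 1) : ℝ)) / (((2 * σ (m - 1) + 1 : ℕ)) : ℝ) := by
          rw [hLm, ← Real.log_div hx0.ne' ha0.ne']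
          have h2 := Real.log_le_sub_one_of_pos (div_pos hx0 ha0)
          have h3 : (((2 * σ m + 1 : ℕ)) : ℝ) / (((2 * σ (m - 1) + 1 : ℕ)) : ℝ) - 1
              = 2 * ((σ m : ℝ) - (σ (m - 1) : ℝ)) / (((2 * σ (m - 1) + 1 : ℕ)) : ℝ) := by
            rw [hxy, add_div, div_self ha0.ne']
            ring
          linarith
        -- bound b/a
        have hden : ((m:ℝ) - 1) * m ≤ (((2 * σ (m - 1) + 1 : ℕ)) : ℝ) := by
          push_cast
          linarith [hquadR]
        have hmm0 : (0:ℝ) < ((m:ℝ) - 1) * m := by nlinarith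
        have hgu := hgapb.2
        rw [hg] at hgu
        have h5 : 2 * ((σ m : ℝ) - (σ (m - 1) : ℝ)) / (((2 * σ (m - 1) + 1 : ℕ)) : ℝ)
            ≤ 2 * (β + δ) * m / (((m:ℝ) - 1) * m) := by
          refine div_le_div₀ (by nlinarith) (by linarith) hmm0 hden
        have h6 : 2 * (β + δ) * m / (((m:ℝ) - 1) * m) = 2 * (β + δ) / ((m:ℝ) - 1) :=
          mul_div_mul_right _ _ (by linarith : (m:ℝ) ≠ 0)
        rw [h6] at h5
        linarith
      -- log m ≤ Lm
      have hlogm : Real.log (m:ℝ) ≤ Lm := by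
        rw [hLm]
        refine Real.log_le_log (by exact_mod_cast Nat.pos_of_ne_zero (by omega)) ?_
        exact_mod_cast hmlequad
      -- now combine everything
      set e : ℝ := 2 * (β + δ) / ((m:ℝ) - 1) with he
      have hcancel : ((m:ℝ) - 1) * e = 2 * (β + δ) := by
        rw [he]; field_simp
      have step1 : stmt18bT t σ m
          ≤ ((m:ℝ) - 1) * ((t:ℝ) * Lm) + (t:ℝ) * (2 * (β + δ)) + ((m:ℝ) - 1) * Real.log 2 := by
        have ha1 : (t:ℝ) * Real.log (((2 * σ m + 1 : ℕ)) : ℝ) ≤ (t:ℝ) * (Lm + e) :=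
          mul_le_mul_of_nonneg_left hlogle htR.le
        have ha2 : ((m:ℝ) - 1) * ((t:ℝ) * Real.log (((2 * σ m + 1 : ℕ)) : ℝ) + Real.log 2)
            ≤ ((m:ℝ) - 1) * ((t:ℝ) * (Lm + e) + Real.log 2) :=
          mul_le_mul_of_nonneg_left (by linarith) (by linarith)
        have ha3 : ((m:ℝ) - 1) * ((t:ℝ) * (Lm + e) + Real.log 2)
            = ((m:ℝ) - 1) * ((t:ℝ) * Lm) + (t:ℝ) * (((m:ℝ) - 1) * e)
              + ((m:ℝ) - 1) * Real.log 2 := by ring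
        rw [ha3, hcancel] at ha2
        linarith
      have h2t : (0:ℝ) ≤ 2 * (t:ℝ) * (β + δ) := by positivity
      have htLm : (0:ℝ) ≤ (t:ℝ) * Lm := by positivity
      have hq : (0:ℝ) ≤ θ * (β - 1) / 2 * (t:ℝ) := by positivity
      have step2 : ((m:ℝ) - 1) * ((t:ℝ) * Lm) ≤ (m:ℝ) * ((t:ℝ) * Lm) :=
        mul_le_mul_of_nonneg_right (by linarith) htLm
      have step2b : ((m:ℝ) - 1) * Real.log 2 ≤ (m:ℝ) * Real.log 2 :=
        mul_le_mul_of_nonneg_right (by linarith) hlog2.le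
      have step3a : (m:ℝ) * Real.log 2 + 2 * (t:ℝ) * (β + δ)
          ≤ (m:ℝ) * (Real.log 2 + 2 * (t:ℝ) * (β + δ)) := by
        nlinarith [mul_nonneg (by linarith : (0:ℝ) ≤ (m:ℝ) - 1) h2t]
      have step3b : (m:ℝ) * (Real.log 2 + 2 * (t:ℝ) * (β + δ))
          ≤ (m:ℝ) * (θ * (β - 1) / 2 * (t:ℝ) * Real.log m) :=
        mul_le_mul_of_nonneg_left hlogb (by linarith)
      have step3c : (m:ℝ) * (θ * (β - 1) / 2 * (t:ℝ) * Real.log m)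
          ≤ (m:ℝ) * (θ * (β - 1) / 2 * (t:ℝ) * Lm) := by
        refine mul_le_mul_of_nonneg_left ?_ (by linarith)
        exact mul_le_mul_of_nonneg_left hlogm hq
      have step4 : stmt18bT t σ m
          ≤ (m:ℝ) * ((t:ℝ) * Lm) + (m:ℝ) * (θ * (β - 1) / 2 * (t:ℝ) * Lm) := by
        linarith
      have hfin1 : (m:ℝ) * ((t:ℝ) * Lm) + (m:ℝ) * (θ * (β - 1) / 2 * (t:ℝ) * Lm)
          = c * (β - 1 - δ) * ((m:ℝ) * ((t:ℝ) * Lm)) := by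
        rw [hkey]; ring
      have hfin2 : c * (β - 1 - δ) * ((m:ℝ) * ((t:ℝ) * Lm))
          ≤ c * ((((σ m + 1 - (σ (m - 1) + m - 1) : ℕ)) : ℝ) * ((t:ℝ) * Lm)) := by
        have hmul : (β - 1 - δ) * (m:ℝ) * ((t:ℝ) * Lm)
            ≤ (((σ m + 1 - (σ (m - 1) + m - 1) : ℕ)) : ℝ) * ((t:ℝ) * Lm) :=
          mul_le_mul_of_nonneg_right hcard_lb htLm
        calc c * (β - 1 - δ) * ((m:ℝ) * ((t:ℝ) * Lm))
            = c * ((β - 1 - δ) * (m:ℝ) * ((t:ℝ) * Lm)) := by ring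
          _ ≤ c * ((((σ m + 1 - (σ (m - 1) + m - 1) : ℕ)) : ℝ) * ((t:ℝ) * Lm)) :=
              mul_le_mul_of_nonneg_left hmul hc0.le
      have hfin3 : c * ((((σ m + 1 - (σ (m - 1) + m - 1) : ℕ)) : ℝ) * ((t:ℝ) * Lm))
          ≤ c * stmt18bS t σ m := mul_le_mul_of_nonneg_left hSlb hc0.le
      exact step4.trans (hfin1.le.trans (hfin2.trans hfin3))
    -- from eventual per-block bound to the global bound
    obtain ⟨M, hM⟩ := eventually_atTop.mp hblock
    refine ⟨∑ m ∈ Finset.Icc 1 M, stmt18bT t σ m,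
      Finset.sum_nonneg (fun m hm => hbT0 m (Finset.mem_Icc.mp hm).1), ?_⟩
    intro k
    induction k with
    | zero =>
      have hT00 : Tf 0 = 0 := by simp [hTf]
      have hS00 : Sf 0 = 0 := by simp [hSf]
      rw [hT00, hS00, mul_zero, zero_add]
      exact Finset.sum_nonneg (fun m hm => hbT0 m (Finset.mem_Icc.mp hm).1)
    | succ k ih =>
      by_cases hkM : k + 1 ≤ M
      · have h1 : Tf (k + 1) ≤ ∑ m ∈ Finset.Icc 1 M, stmt18bT t σ m := by
          refine Finset.sum_le_sum_of_subset_of_nonneg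
            (Finset.Icc_subset_Icc_right hkM) ?_
          intro m hm _
          exact hbT0 m (Finset.mem_Icc.mp hm).1
        have h2 : 0 ≤ c * Sf (k + 1) := mul_nonneg hc0.le (hS0 (k + 1))
        linarith
      · have hstep := hM (k + 1) (by omega)
        have hT' : Tf (k + 1) = Tf k + stmt18bT t σ (k + 1) :=
          Finset.sum_Icc_succ_top (by omega) _
        have hS' : Sf (k + 1) = Sf k + stmt18bS t σ (k + 1) :=
          Finset.sum_Icc_succ_top (by omega) _
        rw [hT', hS', mul_add]
        linarith
  -- main eventual bound
  set LL : ℝ := ((t : ℝ) - 1) * (β - 1) / (2 * (t : ℝ) * β) with hLL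
  have hmain : ∀ ε : ℝ, 0 < ε → ∀ᶠ k in atTop, LL - ε ≤ A k := by
    intro ε hε
    set a : ℝ := ((t:ℝ) - 1) / t with ha
    have htR : (2:ℝ) ≤ (t:ℝ) := by exact_mod_cast ht
    have ha0 : 0 < a := by rw [ha]; apply div_pos <;> linarith
    set b : ℝ := 2 * β / (β - 1) with hb
    have hb0 : 0 < b := by rw [hb]; apply div_pos <;> linarith
    have hLab : LL = a / b := by
      rw [hLL, ha, hb]
      have h1 : (t:ℝ) ≠ 0 := by positivity
      have h2 : β - 1 ≠ 0 := by linarith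
      have h3 : (2:ℝ) * β ≠ 0 := by positivity
      field_simp
    -- choose θ > 0 with LL - ε/2 < a / (b + 2θ)
    have hcont : Tendsto (fun θ : ℝ => a / (b + 2 * θ)) (nhdsWithin 0 (Set.Ioi 0))
        (nhds (a / b)) := by
      have h1 : ContinuousAt (fun θ : ℝ => a / (b + 2 * θ)) 0 := by
        apply ContinuousAt.div continuousAt_const (by fun_prop)
        simp only [mul_zero, add_zero]
        linarith
      have h2 := h1.tendsto
      simp only [mul_zero, add_zero] at h2
      exact h2.mono_left nhdsWithin_le_nhds
    have hε2 : LL - ε / 2 < a / b := by rw [← hLab]; linarith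
    have hev := hcont.eventually (eventually_gt_nhds hε2)
    obtain ⟨θ, hθgt, hθmem⟩ := (hev.and self_mem_nhdsWithin).exists
    have hθ0 : (0:ℝ) < θ := hθmem
    obtain ⟨C, hC0, hCb⟩ := hTS θ hθ0
    set c : ℝ := 1 / (β - 1) + θ with hc
    have hc0 : 0 < c := add_pos (by positivity) hθ0
    have hb2 : b + 2 * θ = 2 + 2 * c := by
      rw [hb, hc]; field_simp; ring
    set K : ℝ := Real.log 2 + 2 * C with hK
    have hK0 : 0 < K := by rw [hK]; linarith
    have hAk : ∀ k, a * Sf k / ((2 + 2 * c) * Sf k + K) ≤ A k := by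
      intro k
      rw [hAdef]
      refine div_le_div₀ (hN0 k) ?_ (hDpos k) ?_
      · rw [ha]; exact hNS k
      · have h5 := hCb k
        rw [hK]; linarith
    have hlim2 : Tendsto (fun x : ℝ => a * x / ((2 + 2 * c) * x + K)) atTop
        (nhds (a / (2 + 2 * c))) := by
      have h1 : Tendsto (fun x : ℝ => a / ((2 + 2 * c) + K * x⁻¹)) atTop
          (nhds (a / ((2 + 2 * c) + K * 0))) := by
        refine Tendsto.div tendsto_const_nhds
          (tendsto_const_nhds.add (tendsto_inv_atTop_zero.const_mul _)) ?_
        simp only [mul_zero, add_zero]; linarith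
      simp only [mul_zero, add_zero] at h1
      refine h1.congr' ?_
      filter_upwards [eventually_gt_atTop (0:ℝ)] with x hx
      field_simp
    have hcomp := hlim2.comp hSinf
    have h2 : LL - ε < a / (2 + 2 * c) := by
      rw [← hb2]; linarith
    have hfin := hcomp.eventually (eventually_gt_nhds h2)
    filter_upwards [hfin] with k hk
    exact le_trans (le_of_lt hk) (hAk k)
  -- conclusion
  have hcb : IsCoboundedUnder (· ≥ ·) atTop A := by
    refine isCoboundedUnder_ge_of_le atTop (x := 1/2) fun k => ?_
    have h1 : A k ≤ Sf k / (Real.log 2 + 2 * Sf k) := by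
      rw [hAdef]
      refine div_le_div₀ (hS0 k) (hNleS k) (by have := hS0 k; linarith) ?_
      have := hT0 k; linarith
    have h2 : Sf k / (Real.log 2 + 2 * Sf k) ≤ 1/2 := by
      rw [div_le_iff₀ (by have := hS0 k; linarith)]
      have := hS0 k; linarith
    linarith
  refine le_of_forall_pos_le_add fun ε hε => ?_
  have h := le_liminf_of_le hcb (hmain ε hε)
  linarith
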